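/- Let f : R₁ → R₂ be a good homomorphism and α an endomorphism of both R₁ and R₂ commuting with f. Then (1) f(ᵅ√I₁) ⊆ ᵅ√(f(I₁)) for a hyperideal I₁ of R₁ (where f(I₁) is contained in some hyperideal of R₂), and (2) ᵅ√(f⁻¹(I₂)) ⊆ f⁻¹(ᵅ√I₂) for a hyperideal I₂ of R₂. -/
import Mathlib


open Pointwise

namespace HyperPaper

/-- A commutative multiplicative hyperring on an additive commutative group:
the hypermultiplication is associative, commutative, subdistributive over `+`,
and compatible with negation. -/
structure MulHyperring (R : Type*) [AddCommGroup R] where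
  hmul : R → R → Set R
  nonempty : ∀ a b, (hmul a b).Nonempty
  comm : ∀ a b, hmul a b = hmul b a
  assoc : ∀ a b c, (⋃ t ∈ hmul a b, hmul t c) = ⋃ t ∈ hmul b c, hmul a t
  distrib : ∀ a b c, hmul a (b + c) ⊆ hmul a b + hmul a c
  hmul_neg : ∀ a b, hmul a (-b) = -(hmul a b)

variable {R : Type*} [AddCommGroup R]

/-- Product of two subsets under the hyperoperation. -/
def MulHyperring.setMul (H : MulHyperring R) (A B : Set R) : Set R :=
  ⋃ a ∈ A, ⋃ b ∈ B, H.hmul a b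

/-- `H.hpow a n` is the `(n+1)`-fold hyperproduct `a ∘ a ∘ ⋯ ∘ a`. -/
def MulHyperring.hpow (H : MulHyperring R) (a : R) : ℕ → Set R
  | 0 => {a}
  | n + 1 => H.setMul {a} (H.hpow a n)

/-- `H.hprod a l` is the hyperproduct of the list `a :: l`. -/
def MulHyperring.hprod (H : MulHyperring R) (a : R) : List R → Set R
  | [] => {a}
  | b :: l => H.setMul {a} (H.hprod b l)

/-- A hyperideal: an additive subgroup absorbing hypermultiplication. -/
structure Hyperideal (H : MulHyperring R) where
  carrier : Set R
  zero_mem : (0 : R) ∈ carrier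
  sub_mem : ∀ a b, a ∈ carrier → b ∈ carrier → a - b ∈ carrier
  absorb : ∀ r x, x ∈ carrier → H.hmul r x ⊆ carrier

/-- A C-hyperideal: any finite hyperproduct meeting it is contained in it. -/
def IsCHyperideal (H : MulHyperring R) (I : Hyperideal H) : Prop :=
  ∀ a (l : List R), (H.hprod a l ∩ I.carrier).Nonempty → H.hprod a l ⊆ I.carrier

/-- A good homomorphism between multiplicative hyperrings. -/
def IsGoodHom {R₁ R₂ : Type*} [AddCommGroup R₁] [AddCommGroup R₂]
    (H₁ : MulHyperring R₁) (H₂ : MulHyperring R₂) (f : R₁ → R₂) : Prop :=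
  (∀ x y, f (x + y) = f x + f y) ∧ ∀ x y, f '' H₁.hmul x y = H₂.hmul (f x) (f y)

/-- A good endomorphism. -/
def IsGoodEndo (H : MulHyperring R) (α : R → R) : Prop :=
  IsGoodHom H H α

/-- A proper hyperideal `I` is `α`-prime if `x ∘ y ⊆ I` implies `x ∈ I` or `α y ∈ I`. -/
def IsAlphaPrime (H : MulHyperring R) (α : R → R) (I : Hyperideal H) : Prop :=
  I.carrier ≠ Set.univ ∧
    ∀ x y, H.hmul x y ⊆ I.carrier → x ∈ I.carrier ∨ α y ∈ I.carrier

/-- A proper hyperideal `I` is prime if `x ∘ y ⊆ I` implies `x ∈ I` or `y ∈ I`. -/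
def IsPrime (H : MulHyperring R) (I : Hyperideal H) : Prop :=
  I.carrier ≠ Set.univ ∧
    ∀ x y, H.hmul x y ⊆ I.carrier → x ∈ I.carrier ∨ y ∈ I.carrier

/-- The radical `√S = {r | rⁿ ⊆ S for some n}`. -/
def radical (H : MulHyperring R) (S : Set R) : Set R :=
  {r | ∃ n : ℕ, H.hpow r n ⊆ S}

/-- The `α`-radical `ᵅ√S = {r | α(rⁿ) ⊆ S for some n}`. -/
def alphaRad (H : MulHyperring R) (α : R → R) (S : Set R) : Set R :=
  {r | ∃ n : ℕ, α '' H.hpow r n ⊆ S}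

/-- The set of `α`-nilpotent elements. -/
def nilAlpha (H : MulHyperring R) (α : R → R) : Set R :=
  {x | ∃ n : ℕ, (0 : R) ∈ α '' H.hpow x n}

/-- The `n`-fold set power of a hyperideal carrier: `idealPow H S n = S^(n+1)`. -/
def idealPow (H : MulHyperring R) (S : Set R) : ℕ → Set R
  | 0 => S
  | n + 1 => H.setMul S (idealPow H S n)

end HyperPaper

open HyperPaper

lemma image_hpow {R₁ R₂ : Type*} [AddCommGroup R₁] [AddCommGroup R₂]
    (H₁ : MulHyperring R₁) (H₂ : MulHyperring R₂) (f : R₁ → R₂)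
    (hf : IsGoodHom H₁ H₂ f) (a : R₁) (n : ℕ) :
    f '' H₁.hpow a n = H₂.hpow (f a) n := by
  induction n with
  | zero => simp [MulHyperring.hpow]
  | succ n ih =>
    simp only [MulHyperring.hpow, MulHyperring.setMul]
    ext y
    simp only [Set.mem_image, Set.mem_iUnion, Set.mem_singleton_iff]
    constructor
    · rintro ⟨x, ⟨b, rfl, c, hc, hx⟩, rfl⟩
      exact ⟨f b, rfl, f c, ih ▸ ⟨c, hc, rfl⟩, (hf.2 b c) ▸ ⟨x, hx, rfl⟩⟩
    · rintro ⟨b, hb, c, hc, hy⟩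
      rw [← ih] at hc
      obtain ⟨c', hc', rfl⟩ := hc
      subst hb; rw [← hf.2 a c'] at hy
      obtain ⟨x, hx, rfl⟩ := hy
      exact ⟨x, ⟨a, rfl, c', hc', hx⟩, rfl⟩

/-- For a good homomorphism `f` commuting with `α`:
`f(ᵅ√I₁) ⊆ ᵅ√(f(I₁))` and `ᵅ√(f⁻¹(I₂)) ⊆ f⁻¹(ᵅ√I₂)`. -/
theorem stmt16 {R₁ R₂ : Type*} [AddCommGroup R₁] [AddCommGroup R₂]
    (H₁ : MulHyperring R₁) (H₂ : MulHyperring R₂) (f : R₁ → R₂)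
    (hf : IsGoodHom H₁ H₂ f) (α₁ : R₁ → R₁) (α₂ : R₂ → R₂)
    (hα₁ : IsGoodEndo H₁ α₁) (hα₂ : IsGoodEndo H₂ α₂)
    (hcomm : ∀ r : R₁, α₂ (f r) = f (α₁ r))
    (I₁ : Hyperideal H₁) (I₂ : Hyperideal H₂) :
    f '' alphaRad H₁ α₁ I₁.carrier ⊆ alphaRad H₂ α₂ (f '' I₁.carrier) ∧
      alphaRad H₁ α₁ (f ⁻¹' I₂.carrier) ⊆ f ⁻¹' (alphaRad H₂ α₂ I₂.carrier) := by
  constructor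
  · rintro y ⟨r, ⟨n, hn⟩, rfl⟩
    refine ⟨n, ?_⟩
    rintro z ⟨w, hw, rfl⟩
    rw [← image_hpow H₁ H₂ f hf] at hw
    obtain ⟨u, hu, rfl⟩ := hw
    rw [hcomm]
    exact ⟨α₁ u, hn ⟨u, hu, rfl⟩, rfl⟩
  · rintro r ⟨n, hn⟩
    refine ⟨n, ?_⟩
    rintro z ⟨w, hw, rfl⟩
    rw [← image_hpow H₁ H₂ f hf] at hw
    obtain ⟨u, hu, rfl⟩ := hw
    rw [hcomm]
    exact hn ⟨u, hu, rfl⟩
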